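/- Let A be a pseudo BL-algebra satisfying, for all n ≥ 1, all elements and all permutations π of {1, …, n}, the inequalities: (i) ((x₁·⋯·xₙ)⁻)² ≤ (x_{π(1)}²·⋯·x_{π(n)}²)⁻; (ii) (((x→y)ⁿ)⁻)² ≤ ((x⇝y)^{2n})⁻; (iii) (((x⇝y)ⁿ)⁻)² ≤ ((x→y)^{2n})⁻. Then every maximal filter of A is normal. -/

import Mathlib

/-- A pseudo BL-algebra: a bounded lattice `(A; ∨, ∧, 0, 1)` together with a monoid
structure `(A; ·, 1)` and two residua `→` (`himp`) and `⇝` (`rimp`) satisfying the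
residuation, divisibility and prelinearity conditions. -/
class PseudoBL (A : Type*) extends Lattice A, Monoid A, Zero A where
  himp : A → A → A
  rimp : A → A → A
  zero_le : ∀ x : A, (0 : A) ≤ x
  le_one : ∀ x : A, x ≤ 1
  mul_le_iff_himp : ∀ x y z : A, x * y ≤ z ↔ x ≤ himp y z
  mul_le_iff_rimp : ∀ x y z : A, x * y ≤ z ↔ y ≤ rimp x z
  himp_mul_inf : ∀ x y : A, himp x y * x = x ⊓ y
  mul_rimp_inf : ∀ x y : A, y * rimp y x = x ⊓ y
  prelin_himp : ∀ x y : A, himp x y ⊔ himp y x = 1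
  prelin_rimp : ∀ x y : A, rimp x y ⊔ rimp y x = 1

namespace PseudoBL

variable {A : Type*} [PseudoBL A]

/-- The left negation `x⁻ := x → 0`. -/
def lneg (x : A) : A := himp x 0

/-- A filter: a nonempty subset closed under `·` and upward closed. -/
def IsFilter (F : Set A) : Prop :=
  F.Nonempty ∧ (∀ x ∈ F, ∀ y ∈ F, x * y ∈ F) ∧ ∀ x ∈ F, ∀ y : A, x ≤ y → y ∈ F

/-- A maximal filter: a proper filter not properly contained in any proper filter. -/
def IsMaximalFilter (F : Set A) : Prop :=
  IsFilter F ∧ F ≠ Set.univ ∧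
    ∀ G : Set A, IsFilter G → G ≠ Set.univ → F ⊆ G → F = G

/-- A normal filter: `x→y ∈ F` iff `x⇝y ∈ F`. -/
def IsNormalFilter (F : Set A) : Prop :=
  ∀ x y : A, himp x y ∈ F ↔ rimp x y ∈ F

end PseudoBL

open PseudoBL

section Helpers

variable {A : Type*} [PseudoBL A]

lemma pbl_mul_le_mul {a b c d : A} (h1 : a ≤ b) (h2 : c ≤ d) : a * c ≤ b * d := by
  have hbd : a * d ≤ b * d := by
    have : b ≤ PseudoBL.himp d (b * d) := (PseudoBL.mul_le_iff_himp b d (b * d)).1 le_rfl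
    exact (PseudoBL.mul_le_iff_himp a d (b * d)).2 (le_trans h1 this)
  have hac : a * c ≤ a * d := by
    have : d ≤ PseudoBL.rimp a (a * d) := (PseudoBL.mul_le_iff_rimp a d (a * d)).1 le_rfl
    exact (PseudoBL.mul_le_iff_rimp a c (a * d)).2 (le_trans h2 this)
  exact le_trans hac hbd

lemma pbl_one_mem {F : Set A} (hF : IsFilter F) : (1 : A) ∈ F := by
  obtain ⟨x, hx⟩ := hF.1
  exact hF.2.2 x hx 1 (PseudoBL.le_one x)

lemma pbl_univ_of_zero_mem {F : Set A} (hF : IsFilter F) (h0 : (0 : A) ∈ F) :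
    F = Set.univ := by
  ext y
  simp only [Set.mem_univ, iff_true]
  exact hF.2.2 0 h0 y (PseudoBL.zero_le y)

lemma pbl_eq_zero_of_le_zero {x : A} (h : x ≤ 0) : x = 0 :=
  le_antisymm h (PseudoBL.zero_le x)

lemma pbl_lneg_zero : lneg (0 : A) = 1 := by
  refine le_antisymm (PseudoBL.le_one _) ?_
  have : (1 : A) * 0 ≤ 0 := by rw [one_mul]
  exact (PseudoBL.mul_le_iff_himp 1 0 0).1 this

lemma pbl_lneg_mul_self (x : A) : lneg x * x = 0 := by
  have := PseudoBL.himp_mul_inf x (0 : A)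
  have hinf : x ⊓ 0 = 0 :=
    le_antisymm inf_le_right (le_inf (PseudoBL.zero_le x) le_rfl)
  rw [lneg, this, hinf]

lemma pbl_prod_mem {F : Set A} (hF : IsFilter F) :
    ∀ l : List A, (∀ t ∈ l, t ∈ F) → l.prod ∈ F := by
  intro l
  induction l with
  | nil => intro _; simpa using pbl_one_mem hF
  | cons a l ih =>
    intro h
    rw [List.prod_cons]
    exact hF.2.1 a (h a (by simp)) l.prod (ih fun t ht => h t (by simp [ht]))

lemma pbl_pow_mem {F : Set A} (hF : IsFilter F) {x : A} (hx : x ∈ F) :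
    ∀ n : ℕ, x ^ n ∈ F := by
  intro n
  induction n with
  | zero => simpa using pbl_one_mem hF
  | succ n ih => rw [pow_succ]; exact hF.2.1 _ ih _ hx

/-- Key lemma: in a maximal filter, any `a ∉ F` has some power whose left negation
is in `F` (using hypothesis (i)). -/
lemma pbl_key
    {A : Type*} [PseudoBL A]
    (h1 : ∀ (n : ℕ), 1 ≤ n → ∀ (x : Fin n → A) (π : Equiv.Perm (Fin n)),
      lneg (List.ofFn x).prod ^ 2 ≤ lneg (List.ofFn (fun i => x (π i) ^ 2)).prod)
    {F : Set A} (hF : IsMaximalFilter F) {a : A} (ha : a ∉ F) :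
    ∃ m : ℕ, 1 ≤ m ∧ lneg (a ^ m) ∈ F := by
  classical
  obtain ⟨hFfil, hFne, hFmax⟩ := hF
  -- the filter generated by F ∪ {a}
  set G : Set A := {z | ∃ l : List A, (∀ t ∈ l, t ∈ F ∨ t = a) ∧ l.prod ≤ z} with hG
  have hGfil : IsFilter G := by
    refine ⟨⟨a, ⟨[a], by simp, by simp⟩⟩, ?_, ?_⟩
    · rintro x ⟨l1, hl1, hp1⟩ y ⟨l2, hl2, hp2⟩
      refine ⟨l1 ++ l2, ?_, ?_⟩
      · intro t ht
        rcases List.mem_append.1 ht with h | h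
        · exact hl1 t h
        · exact hl2 t h
      · rw [List.prod_append]; exact pbl_mul_le_mul hp1 hp2
    · rintro x ⟨l, hl, hp⟩ y hxy
      exact ⟨l, hl, le_trans hp hxy⟩
  have hFG : F ⊆ G := fun f hf => ⟨[f], by simp [hf], by simp⟩
  have haG : a ∈ G := ⟨[a], by simp, by simp⟩
  have hGuniv : G = Set.univ := by
    by_contra hne
    have := hFmax G hGfil hne hFG
    exact ha (this ▸ haG)
  have h0G : (0 : A) ∈ G := hGuniv ▸ Set.mem_univ 0
  obtain ⟨l, hl, hp⟩ := h0G
  have hprod : l.prod = 0 := pbl_eq_zero_of_le_zero hp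
  -- l cannot be empty (else 1 = 0, making F = univ)
  rcases eq_or_ne l [] with rfl | hlne
  · exfalso
    apply hFne
    apply pbl_univ_of_zero_mem hFfil
    have h10 : (1 : A) = 0 := by simpa using hprod
    have h1F : (1 : A) ∈ F := pbl_one_mem hFfil
    rwa [h10] at h1F
  set n := l.length with hn
  have hn1 : 1 ≤ n := by
    rcases l with _ | ⟨b, l⟩
    · exact absurd rfl hlne
    · simp [hn]
  set x : Fin n → A := fun i => l.get i with hx
  have hofn : List.ofFn x = l := List.ofFn_get l
  -- sort indices so that F-elements come first
  set w : Fin n → ℕ := fun i => if x i ∈ F then 0 else 1 with hw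
  set σ : Equiv.Perm (Fin n) := Tuple.sort w with hσ
  have hmono : Monotone (w ∘ σ) := Tuple.monotone_sort w
  have hmem : ∀ i : Fin n, x i ∈ F ∨ x i = a := fun i => hl (x i) (by
    rw [← hofn]; exact List.mem_ofFn.2 ⟨i, rfl⟩)
  -- k : the threshold
  have hex : ∃ m : ℕ, ∀ i : Fin n, m ≤ i.val → x (σ i) = a :=
    ⟨n, fun i hi => absurd i.isLt (not_lt.2 hi)⟩
  set k : ℕ := Nat.find hex with hk
  have hk2 : ∀ i : Fin n, k ≤ i.val → x (σ i) = a := Nat.find_spec hex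
  have hkle : k ≤ n := Nat.find_min' _ (fun i hi => absurd i.isLt (not_lt.2 hi))
  have hk1 : ∀ i : Fin n, i.val < k → x (σ i) ∈ F := by
    intro i hik
    by_contra hxi
    have hwi : w (σ i) = 1 := by simp [hw, hxi]
    have hP : ∀ j : Fin n, i.val ≤ j.val → x (σ j) = a := by
      intro j hij
      have hij' : i ≤ j := hij
      have : w (σ i) ≤ w (σ j) := hmono hij'
      rw [hwi] at this
      have hxj : x (σ j) ∉ F := by
        intro hmem'
        simp [hw, hmem'] at this
      rcases hmem (σ j) with h | h
      · exact absurd h hxj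
      · exact h
    exact absurd (Nat.find_le hP) (not_le.2 hik)
  -- apply hypothesis (i)
  have happ := h1 n hn1 x σ
  rw [hofn, hprod, pbl_lneg_zero, one_pow] at happ
  set L : List A := List.ofFn (fun i => x (σ i) ^ 2) with hL
  have hQ0 : L.prod = 0 := by
    apply pbl_eq_zero_of_le_zero
    have := (PseudoBL.mul_le_iff_himp 1 L.prod 0).2 happ
    rwa [one_mul] at this
  have hLlen : L.length = n := by simp [hL]
  -- split the product at k
  have hsplit : (L.take k).prod * (L.drop k).prod = L.prod :=
    List.prod_take_mul_prod_drop L k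
  have hdrop : L.drop k = List.replicate (n - k) (a ^ 2) := by
    rw [List.eq_replicate_iff]
    constructor
    · simp [hLlen]
    · intro b hb
      obtain ⟨j, hj, hjb⟩ := List.mem_iff_getElem.1 hb
      rw [List.getElem_drop] at hjb
      have hkj : k + j < n := by
        have := hj
        simp [List.length_drop, hLlen] at this
        omega
      have : L[k + j]'(by simpa [hLlen] using hkj) = x (σ ⟨k + j, hkj⟩) ^ 2 := by
        simp [hL]
      rw [this] at hjb
      rw [hk2 ⟨k + j, hkj⟩ (by simp)] at hjb
      exact hjb.symm
  have htake : (L.take k).prod ∈ F := by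
    apply pbl_prod_mem hFfil
    intro b hb
    obtain ⟨j, hj, hjb⟩ := List.mem_iff_getElem.1 hb
    have hjk : j < k := by
      have := hj
      simp [List.length_take, hLlen] at this
      exact this.1
    have hjn : j < n := lt_of_lt_of_le hjk hkle
    rw [List.getElem_take] at hjb
    have : L[j]'(by simpa [hLlen] using hjn) = x (σ ⟨j, hjn⟩) ^ 2 := by
      simp [hL]
    rw [this] at hjb
    have hxF : x (σ ⟨j, hjn⟩) ∈ F := hk1 ⟨j, hjn⟩ hjk
    rw [← hjb]
    exact pbl_pow_mem hFfil hxF 2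
  rw [hdrop, List.prod_replicate, ← pow_mul, hQ0] at hsplit
  rcases Nat.eq_zero_or_pos (n - k) with hnk | hnk
  · exfalso
    rw [hnk] at hsplit
    simp only [Nat.mul_zero, pow_zero, mul_one] at hsplit
    exact hFne (pbl_univ_of_zero_mem hFfil (hsplit ▸ htake))
  · refine ⟨2 * (n - k), by omega, ?_⟩
    have hle : (L.take k).prod ≤ lneg (a ^ (2 * (n - k))) :=
      (PseudoBL.mul_le_iff_himp _ _ 0).1 (le_of_eq hsplit)
    exact hFfil.2.2 _ htake _ hle

end Helpers

/-- A pseudo BL-algebra satisfying inequalities (i)-(iii) has every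
maximal filter normal. -/
theorem stmt_4 {A : Type*} [PseudoBL A]
    (h1 : ∀ (n : ℕ), 1 ≤ n → ∀ (x : Fin n → A) (π : Equiv.Perm (Fin n)),
      lneg (List.ofFn x).prod ^ 2 ≤ lneg (List.ofFn (fun i => x (π i) ^ 2)).prod)
    (h2 : ∀ (n : ℕ), 1 ≤ n → ∀ x y : A,
      lneg (PseudoBL.himp x y ^ n) ^ 2 ≤ lneg (PseudoBL.rimp x y ^ (2 * n)))
    (h3 : ∀ (n : ℕ), 1 ≤ n → ∀ x y : A,
      lneg (PseudoBL.rimp x y ^ n) ^ 2 ≤ lneg (PseudoBL.himp x y ^ (2 * n))) :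
    ∀ F : Set A, IsMaximalFilter F → IsNormalFilter F := by
  intro F hF x y
  constructor
  · intro hxy
    by_contra ha
    obtain ⟨m, hm, hln⟩ := pbl_key h1 hF ha
    have h3' := h3 m hm x y
    have hsq : lneg (PseudoBL.rimp x y ^ m) ^ 2 ∈ F := pbl_pow_mem hF.1 hln 2
    have hln2 : lneg (PseudoBL.himp x y ^ (2 * m)) ∈ F := hF.1.2.2 _ hsq _ h3'
    have hpow : PseudoBL.himp x y ^ (2 * m) ∈ F := pbl_pow_mem hF.1 hxy (2 * m)
    have h0 : (0 : A) ∈ F := by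
      have := hF.1.2.1 _ hln2 _ hpow
      rwa [pbl_lneg_mul_self] at this
    exact hF.2.1 (pbl_univ_of_zero_mem hF.1 h0)
  · intro hxy
    by_contra ha
    obtain ⟨m, hm, hln⟩ := pbl_key h1 hF ha
    have h2' := h2 m hm x y
    have hsq : lneg (PseudoBL.himp x y ^ m) ^ 2 ∈ F := pbl_pow_mem hF.1 hln 2
    have hln2 : lneg (PseudoBL.rimp x y ^ (2 * m)) ∈ F := hF.1.2.2 _ hsq _ h2'
    have hpow : PseudoBL.rimp x y ^ (2 * m) ∈ F := pbl_pow_mem hF.1 hxy (2 * m)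
    have h0 : (0 : A) ∈ F := by
      have := hF.1.2.1 _ hln2 _ hpow
      rwa [pbl_lneg_mul_self] at this
    exact hF.2.1 (pbl_univ_of_zero_mem hF.1 h0)
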